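/- In the setting of the previous statement, for $\delta>0$ define the $\delta$-adjusted relative error $\varepsilon(\widetilde{H},z)=\|\widetilde{H}(z)-H(z)\|_F/(\|H(z)\|_F+\delta)$ and $\Delta(z)=\|C(zE-A)^{-1}\widetilde{B}\|_F/(\|C(zE-A)^{-1}B\|_F+\delta)$ with $\widetilde{B}=E\sum_j q_j(z_jE-A)^{-1}B$. Then $\varepsilon(\widetilde{H},z)=\Delta(z)\,|Q(z)|^{-1}$ for every $z$ with $zE-A$ invertible, $z\notin\{z_1,\dots,z_S\}$, and $Q(z)\neq 0$. -/
import Mathlib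


/-- The Frobenius norm of a complex matrix. -/
noncomputable def frob {a b : ℕ} (M : Matrix (Fin a) (Fin b) ℂ) : ℝ :=
  Real.sqrt (∑ i, ∑ j, ‖M i j‖ ^ 2)

lemma frob_smul {a b : ℕ} (c : ℂ) (M : Matrix (Fin a) (Fin b) ℂ) :
    frob (c • M) = ‖c‖ * frob M := by
  unfold frob
  have : ∀ i, ∑ j, ‖(c • M) i j‖ ^ 2 = ‖c‖^2 * ∑ j, ‖M i j‖ ^ 2 := by
    intro i
    rw [Finset.mul_sum]
    congr 1; ext j
    simp [Matrix.smul_apply, norm_smul, mul_pow]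
  simp_rw [this]
  rw [← Finset.mul_sum, Real.sqrt_mul (by positivity), Real.sqrt_sq (norm_nonneg c)]

/-- The δ-adjusted relative error of the barycentric surrogate equals
`Δ(z) * |Q(z)|⁻¹`. -/
theorem relative_error_eq_Delta_mul_inv_absQ
    {n m p S : ℕ}
    (C : Matrix (Fin p) (Fin n) ℂ)
    (E A : Matrix (Fin n) (Fin n) ℂ) (B : Matrix (Fin n) (Fin m) ℂ)
    (δ : ℝ) (hδ : 0 < δ)
    (z : Fin S → ℂ) (hz : Function.Injective z)
    (hinv : ∀ j, IsUnit (z j • E - A))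
    (q : Fin S → ℂ)
    (H : ℂ → Matrix (Fin p) (Fin m) ℂ)
    (hH : ∀ w, H w = C * ((w • E - A)⁻¹ * B))
    (Q : ℂ → ℂ) (hQ : ∀ w, Q w = ∑ j, q j / (w - z j))
    (Ht : ℂ → Matrix (Fin p) (Fin m) ℂ)
    (hHt : ∀ w, Ht w = (Q w)⁻¹ • ∑ j, (q j / (w - z j)) • H (z j))
    (Bt : Matrix (Fin n) (Fin m) ℂ)
    (hBt : Bt = E * ∑ j, q j • ((z j • E - A)⁻¹ * B))
    (ε : ℂ → ℝ) (hε : ∀ w, ε w = frob (Ht w - H w) / (frob (H w) + δ))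
    (Δ : ℂ → ℝ)
    (hΔ : ∀ w, Δ w = frob (C * ((w • E - A)⁻¹ * Bt)) /
      (frob (C * ((w • E - A)⁻¹ * B)) + δ)) :
    ∀ w : ℂ, IsUnit (w • E - A) → w ∉ Set.range z → Q w ≠ 0 →
      ε w = Δ w * ‖Q w‖⁻¹ := by
  intro w hw hwz hQw
  set M := w • E - A with hM
  have hMdet : IsUnit M.det := (Matrix.isUnit_iff_isUnit_det _).mp hw
  have hwzj : ∀ j, w - z j ≠ 0 := by
    intro j h
    exact hwz ⟨j, by linear_combination -h⟩
  -- key identity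
  have key : Ht w - H w = (Q w)⁻¹ • (C * (M⁻¹ * Bt)) := by
    have hHw : H w = (Q w)⁻¹ • ((Q w) • H w) := by
      rw [smul_smul, inv_mul_cancel₀ hQw, one_smul]
    rw [hHt, hHw, ← smul_sub]
    congr 1
    rw [hQ, Finset.sum_smul, ← Finset.sum_sub_distrib]
    have term : ∀ j, (q j / (w - z j)) • H (z j) - (q j / (w - z j)) • H w
        = q j • (C * (M⁻¹ * (E * ((z j • E - A)⁻¹ * B)))) := by
      intro j
      have hNdet : IsUnit (z j • E - A).det := (Matrix.isUnit_iff_isUnit_det _).mp (hinv j)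
      have hdiff : (z j • E - A)⁻¹ - M⁻¹ = (w - z j) • (M⁻¹ * (E * (z j • E - A)⁻¹)) := by
        have h1 : M⁻¹ * M * (z j • E - A)⁻¹ = (z j • E - A)⁻¹ := by
          rw [Matrix.nonsing_inv_mul _ hMdet, Matrix.one_mul]
        have h2 : M⁻¹ * (z j • E - A) * (z j • E - A)⁻¹ = M⁻¹ := by
          rw [Matrix.mul_assoc, Matrix.mul_nonsing_inv _ hNdet, Matrix.mul_one]
        calc (z j • E - A)⁻¹ - M⁻¹
            = M⁻¹ * (M - (z j • E - A)) * (z j • E - A)⁻¹ := by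
              rw [Matrix.mul_sub, Matrix.sub_mul, h1, h2]
          _ = (w - z j) • (M⁻¹ * (E * (z j • E - A)⁻¹)) := by
              have : M - (z j • E - A) = (w - z j) • E := by
                rw [hM, sub_smul]; abel
              rw [this, Matrix.mul_smul, Matrix.smul_mul, Matrix.mul_assoc]
      rw [← smul_sub, hH, hH, ← Matrix.mul_sub, ← Matrix.sub_mul, hdiff,
        Matrix.smul_mul, Matrix.mul_smul, smul_smul, div_mul_cancel₀ _ (hwzj j)]
      rw [Matrix.mul_assoc, Matrix.mul_assoc]
    rw [Finset.sum_congr rfl (fun j _ => term j)]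
    rw [hBt, Matrix.mul_sum, Matrix.mul_sum, Matrix.mul_sum]
    exact Finset.sum_congr rfl (fun j _ => by rw [Matrix.mul_smul, Matrix.mul_smul, Matrix.mul_smul])
  rw [hε, key, frob_smul, hΔ, hH, norm_inv]
  ring
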